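/- non(Ufin(B_Γ,B_T)) = non(Ufin(Γ,T)) = 𝔵; that is, the minimal cardinality of a set of real numbers not satisfying Ufin(B_Γ,B_T), and the minimal cardinality of a set of real numbers not satisfying Ufin(Γ,T), both equal 𝔵, where 𝔵 is the minimal cardinality of a family Y ⊆ ℕ^ℕ which does not satisfy the excluded middle property. -/

import Mathlib

open Set

namespace TauCoverPaper

/-- `a ⊆* b`: `a \ b` is finite. -/
def AlmostSubset (a b : Set ℕ) : Prop := (a \ b).Finite

/-- `Y` is linearly quasiordered by `⊆*`. -/
def LinQuasi (Y : Set (Set ℕ)) : Prop :=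
  ∀ a ∈ Y, ∀ b ∈ Y, AlmostSubset a b ∨ AlmostSubset b a

/-- `a` is a pseudo-intersection of the family `Y`. -/
def PseudoIntersection (a : Set ℕ) (Y : Set (Set ℕ)) : Prop :=
  a.Infinite ∧ ∀ b ∈ Y, AlmostSubset a b

/-- `Y` is centered: every nonempty finite subfamily has infinite intersection. -/
def Centered (Y : Set (Set ℕ)) : Prop :=
  ∀ F : Set (Set ℕ), F ⊆ Y → F.Finite → F.Nonempty → (⋂₀ F).Infinite

/-- A tower: a family of infinite subsets of `ℕ`, linearly quasiordered by `⊆*`,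
with no pseudo-intersection. -/
def IsTower (Y : Set (Set ℕ)) : Prop :=
  (∀ a ∈ Y, a.Infinite) ∧ LinQuasi Y ∧ ¬ ∃ a, PseudoIntersection a Y

variable {α : Type}

/-- A cover of the space `α`: the union is everything, and the whole space is
not a member. -/
def IsCover (𝒰 : Set (Set α)) : Prop := ⋃₀ 𝒰 = univ ∧ univ ∉ 𝒰

/-- A large cover: each point belongs to infinitely many members. -/
def IsLargeCover (𝒰 : Set (Set α)) : Prop :=
  IsCover 𝒰 ∧ ∀ x : α, {U ∈ 𝒰 | x ∈ U}.Infinite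

/-- An ω-cover: each finite set is contained in some member. -/
def IsOmegaCover (𝒰 : Set (Set α)) : Prop :=
  IsCover 𝒰 ∧ ∀ F : Set α, F.Finite → ∃ U ∈ 𝒰, F ⊆ U

/-- A γ-cover: infinite, and each point belongs to all but finitely many members. -/
def IsGammaCover (𝒰 : Set (Set α)) : Prop :=
  IsCover 𝒰 ∧ 𝒰.Infinite ∧ ∀ x : α, {U ∈ 𝒰 | x ∉ U}.Finite

/-- A τ-cover: a large cover such that for all `x, y`, one of the sets
`{U : x ∈ U, y ∉ U}`, `{U : y ∈ U, x ∉ U}` is finite. -/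
def IsTauCover (𝒰 : Set (Set α)) : Prop :=
  IsLargeCover 𝒰 ∧ ∀ x y : α,
    {U ∈ 𝒰 | x ∈ U ∧ y ∉ U}.Finite ∨ {U ∈ 𝒰 | y ∈ U ∧ x ∉ U}.Finite

/-- A τ*-cover: a large, countably infinite cover which, enumerated bijectively
as `⟨Uₙ⟩`, admits for each point `y` an infinite `r y ⊆ {n | y ∈ Uₙ}` such that
the family `{r y}` is linearly quasiordered by `⊆*`. -/
def IsTauStarCover (𝒰 : Set (Set α)) : Prop :=
  IsLargeCover 𝒰 ∧
  ∃ U : ℕ → Set α, Function.Injective U ∧ Set.range U = 𝒰 ∧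
    ∃ r : α → Set ℕ,
      (∀ y : α, (r y).Infinite ∧ r y ⊆ {n | y ∈ U n}) ∧
      (∀ y z : α, AlmostSubset (r y) (r z) ∨ AlmostSubset (r z) (r y))

/-- Ω : countable open ω-covers. -/
def OpenOmega (α : Type) [TopologicalSpace α] : Set (Set (Set α)) :=
  {𝒰 | 𝒰.Countable ∧ (∀ U ∈ 𝒰, IsOpen U) ∧ IsOmegaCover 𝒰}

/-- Γ : countable open γ-covers. -/
def OpenGamma (α : Type) [TopologicalSpace α] : Set (Set (Set α)) :=
  {𝒰 | 𝒰.Countable ∧ (∀ U ∈ 𝒰, IsOpen U) ∧ IsGammaCover 𝒰}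

/-- T : countable open τ-covers. -/
def OpenTau (α : Type) [TopologicalSpace α] : Set (Set (Set α)) :=
  {𝒰 | 𝒰.Countable ∧ (∀ U ∈ 𝒰, IsOpen U) ∧ IsTauCover 𝒰}

/-- T* : countable open τ*-covers. -/
def OpenTauStar (α : Type) [TopologicalSpace α] : Set (Set (Set α)) :=
  {𝒰 | 𝒰.Countable ∧ (∀ U ∈ 𝒰, IsOpen U) ∧ IsTauStarCover 𝒰}

/-- B_Ω : countable Borel ω-covers. -/
def BorelOmega (α : Type) [MeasurableSpace α] : Set (Set (Set α)) :=
  {𝒰 | 𝒰.Countable ∧ (∀ U ∈ 𝒰, MeasurableSet U) ∧ IsOmegaCover 𝒰}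

/-- B_Γ : countable Borel γ-covers. -/
def BorelGamma (α : Type) [MeasurableSpace α] : Set (Set (Set α)) :=
  {𝒰 | 𝒰.Countable ∧ (∀ U ∈ 𝒰, MeasurableSet U) ∧ IsGammaCover 𝒰}

/-- B_T : countable Borel τ-covers. -/
def BorelTau (α : Type) [MeasurableSpace α] : Set (Set (Set α)) :=
  {𝒰 | 𝒰.Countable ∧ (∀ U ∈ 𝒰, MeasurableSet U) ∧ IsTauCover 𝒰}

/-- The selection principle S₁(𝔘,𝔙). -/
def S1 (𝔘 𝔙 : Set (Set (Set α))) : Prop :=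
  ∀ 𝒰 : ℕ → Set (Set α), (∀ n, 𝒰 n ∈ 𝔘) →
    ∃ V : ℕ → Set α, (∀ n, V n ∈ 𝒰 n) ∧ Set.range V ∈ 𝔙

/-- The selection principle Sfin(𝔘,𝔙). -/
def Sfin (𝔘 𝔙 : Set (Set (Set α))) : Prop :=
  ∀ 𝒰 : ℕ → Set (Set α), (∀ n, 𝒰 n ∈ 𝔘) →
    ∃ F : ℕ → Set (Set α), (∀ n, (F n).Finite ∧ F n ⊆ 𝒰 n) ∧ (⋃ n, F n) ∈ 𝔙

/-- The selection principle Ufin(𝔘,𝔙). -/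
def Ufin (𝔘 𝔙 : Set (Set (Set α))) : Prop :=
  ∀ 𝒰 : ℕ → Set (Set α), (∀ n, 𝒰 n ∈ 𝔘) →
    (∀ n, ¬ ∃ F : Set (Set α), F ⊆ 𝒰 n ∧ F.Finite ∧ ⋃₀ F = univ) →
    ∃ F : ℕ → Set (Set α), (∀ n, (F n).Finite ∧ F n ⊆ 𝒰 n) ∧
      Set.range (fun n => ⋃₀ (F n)) ∈ 𝔙

/-- binom(𝔘,𝔙): each member of 𝔘 contains a subfamily belonging to 𝔙. -/
def Binom (𝔘 𝔙 : Set (Set (Set α))) : Prop :=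
  ∀ 𝒰 ∈ 𝔘, ∃ 𝒱 ⊆ 𝒰, 𝒱 ∈ 𝔙

/-- Borel measurability of a map into `P(ℕ)` (identified with the Cantor
space via characteristic functions): each coordinate is measurable. -/
def BorelMeasSets {β : Type} [MeasurableSpace β] (f : β → Set ℕ) : Prop :=
  ∀ n : ℕ, MeasurableSet {x | n ∈ f x}

/-- The excluded middle property for a family `Y ⊆ ℕ^ℕ`. -/
def ExcludedMiddleProp (Y : Set (ℕ → ℕ)) : Prop :=
  ∃ g : ℕ → ℕ,
    (∀ f ∈ Y, {n | f n < g n}.Infinite) ∧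
    ∀ f ∈ Y, ∀ h ∈ Y,
      {n | f n < g n ∧ g n ≤ h n}.Finite ∨ {n | h n < g n ∧ g n ≤ f n}.Finite

/-- non(J): the minimal cardinality of a set of reals not satisfying `J`. -/
noncomputable def nonCard (J : Set ℝ → Prop) : Cardinal :=
  sInf {c : Cardinal | ∃ X : Set ℝ, ¬ J X ∧ Cardinal.mk ↥X = c}

/-- add(J): the minimal cardinality of a family of sets of reals, each
satisfying `J`, whose union does not satisfy `J`. -/
noncomputable def addCard (J : Set ℝ → Prop) : Cardinal :=
  sInf {c : Cardinal | ∃ 𝔉 : Set (Set ℝ),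
    (∀ A ∈ 𝔉, J A) ∧ ¬ J (⋃₀ 𝔉) ∧ Cardinal.mk ↥𝔉 = c}

/-- 𝔱 : the minimal cardinality of a tower. -/
noncomputable def towerCard : Cardinal :=
  sInf {c : Cardinal | ∃ Y : Set (Set ℕ), IsTower Y ∧ Cardinal.mk ↥Y = c}

/-- 𝔵 : the minimal cardinality of a family `Y ⊆ ℕ^ℕ` without the excluded
middle property. -/
noncomputable def xCard : Cardinal :=
  sInf {c : Cardinal | ∃ Y : Set (ℕ → ℕ),
    ¬ ExcludedMiddleProp Y ∧ Cardinal.mk ↥Y = c}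
/-! ### Auxiliary lemmas -/

section Aux

lemma emp_mono {Y Z : Set (ℕ → ℕ)} (h : Y ⊆ Z) (hZ : ExcludedMiddleProp Z) :
    ExcludedMiddleProp Y := by
  obtain ⟨g, h1, h2⟩ := hZ
  exact ⟨g, fun f hf => h1 f (h hf), fun f hf f' hf' => h2 f (h hf) f' (h hf')⟩

lemma emp_of_countable {Y : Set (ℕ → ℕ)} (hY : Y.Countable) : ExcludedMiddleProp Y := by
  rcases Y.eq_empty_or_nonempty with rfl | hne
  · exact ⟨fun _ => 0, fun f hf => absurd hf (notMem_empty f),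
      fun f hf => absurd hf (notMem_empty f)⟩
  obtain ⟨e, rfl⟩ := hY.exists_eq_range hne
  refine ⟨fun n => (Finset.range (n + 1)).sup (fun i => e i n) + 1, ?_, ?_⟩
  · rintro f ⟨i, rfl⟩
    refine ((Set.Ici_infinite i).mono ?_)
    intro n hn
    have : e i n ≤ (Finset.range (n + 1)).sup (fun j => e j n) :=
      Finset.le_sup (f := fun j => e j n) (Finset.mem_range.mpr (Nat.lt_succ_of_le hn))
    simpa using Nat.lt_succ_of_le this
  · rintro f ⟨i, rfl⟩ f' ⟨j, rfl⟩
    left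
    refine (Set.finite_Iio j).subset ?_
    intro n hn
    simp only [Set.mem_setOf_eq] at hn
    by_contra hc
    simp only [Set.mem_Iio, not_lt] at hc
    have h1 : e j n ≤ (Finset.range (n + 1)).sup (fun k => e k n) :=
      Finset.le_sup (f := fun k => e k n) (Finset.mem_range.mpr (Nat.lt_succ_of_le hc))
    have := hn.2
    omega

lemma not_emp_univ : ¬ ExcludedMiddleProp (univ : Set (ℕ → ℕ)) := by
  rintro ⟨g, h1, -⟩
  have h := h1 g (mem_univ g)
  have : {n | g n < g n} = ∅ := by ext n; simp
  rw [this] at h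
  exact h (Set.finite_empty)

lemma xSet_nonempty :
    {c : Cardinal | ∃ Y : Set (ℕ → ℕ), ¬ ExcludedMiddleProp Y ∧ Cardinal.mk ↥Y = c}.Nonempty :=
  ⟨_, ⟨univ, not_emp_univ, rfl⟩⟩

lemma aleph0_le_xCard : Cardinal.aleph0 ≤ xCard := by
  refine le_csInf xSet_nonempty ?_
  rintro c ⟨Y, hY, rfl⟩
  by_contra h
  push_neg at h
  exact hY (emp_of_countable ((Cardinal.lt_aleph0_iff_set_finite.mp h).countable))

lemma emp_of_mk_lt {Y : Set (ℕ → ℕ)} (h : Cardinal.mk ↥Y < xCard) : ExcludedMiddleProp Y := by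
  by_contra hY
  exact absurd h (not_lt.mpr (csInf_le ⟨0, fun c _ => c.zero_le⟩ ⟨Y, hY, rfl⟩))

lemma almost_linear_biInter_infinite {ι : Type} (σ : ι → Set ℕ)
    (hinf : ∀ i, (σ i).Infinite)
    (hlin : ∀ i j, (σ i \ σ j).Finite ∨ (σ j \ σ i).Finite)
    (P : Finset ι) (hP : P.Nonempty) : (⋂ i ∈ P, σ i).Infinite := by
  classical
  have main : ∀ P : Finset ι, P.Nonempty → ∃ i ∈ P, (σ i \ ⋂ j ∈ P, σ j).Finite := by
    intro P
    induction P using Finset.induction_on with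
    | empty => intro h; exact absurd h (by simp)
    | insert a P ha ih =>
      intro _
      by_cases hP : P.Nonempty
      · obtain ⟨i₀, hi₀, hfin⟩ := ih hP
        rcases hlin a i₀ with h1 | h1
        · refine ⟨a, Finset.mem_insert_self a P, ?_⟩
          refine (h1.union hfin).subset ?_
          rintro n ⟨hna, hn2⟩
          simp only [Set.mem_iInter, not_forall] at hn2
          obtain ⟨j, hj, hnj⟩ := hn2
          rcases Finset.mem_insert.mp hj with rfl | hjP
          · exact absurd hna hnj
          · by_cases hni : n ∈ σ i₀
            · exact Or.inr ⟨hni, by simp only [Set.mem_iInter, not_forall]; exact ⟨j, hjP, hnj⟩⟩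
            · exact Or.inl ⟨hna, hni⟩
        · refine ⟨i₀, Finset.mem_insert_of_mem hi₀, ?_⟩
          refine (h1.union hfin).subset ?_
          rintro n ⟨hni, hn2⟩
          simp only [Set.mem_iInter, not_forall] at hn2
          obtain ⟨j, hj, hnj⟩ := hn2
          rcases Finset.mem_insert.mp hj with rfl | hjP
          · exact Or.inl ⟨hni, hnj⟩
          · by_cases hna : n ∈ σ i₀
            · exact Or.inr ⟨hna, by simp only [Set.mem_iInter, not_forall]; exact ⟨j, hjP, hnj⟩⟩
            · exact absurd hni hna
      · rw [Finset.not_nonempty_iff_eq_empty] at hP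
        subst hP
        refine ⟨a, Finset.mem_insert_self a ∅, ?_⟩
        have : (⋂ j ∈ insert a (∅ : Finset ι), σ j) = σ a := by simp
        rw [this]
        simp
  obtain ⟨i, hiP, hfin⟩ := main P hP
  refine ((hinf i).diff hfin).mono ?_
  rintro n ⟨h1, h2⟩
  by_contra hc
  exact h2 ⟨h1, hc⟩

end Aux

/-! ### The lower bound: small sets satisfy `Ufin(B_Γ, B_T)` -/

theorem ufin_of_mk_lt {α : Type} [MeasurableSpace α] (hcard : Cardinal.mk α < xCard) :
    Ufin (BorelGamma α) (BorelTau α) := by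
  classical
  intro 𝒰 h𝒰 hnfs
  have hcover : ∀ n, ⋃₀ 𝒰 n = univ := fun n => (h𝒰 n).2.2.1.1
  have hcnt : ∀ n, (𝒰 n).Countable := fun n => (h𝒰 n).1
  have hne : ∀ n, (𝒰 n).Nonempty := fun n => ((h𝒰 n).2.2.2.1).nonempty
  choose e he using fun n => (hcnt n).exists_eq_range (hne n)
  have hex : ∀ (x : α) (n : ℕ), ∃ m, x ∈ e n m := by
    intro x n
    have hx : x ∈ ⋃₀ 𝒰 n := by rw [hcover n]; trivial
    obtain ⟨U, hU, hxU⟩ := hx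
    rw [he n] at hU
    obtain ⟨m, rfl⟩ := hU
    exact ⟨m, hxU⟩
  set fx : α → ℕ → ℕ := fun x n => sInf {m | x ∈ e n m} with hfxdef
  have hfx_mem : ∀ x n, x ∈ e n (fx x n) := fun x n => Nat.sInf_mem (hex x n)
  have hfx_min : ∀ x n m, x ∈ e n m → fx x n ≤ m := fun x n m h => Nat.sInf_le h
  obtain ⟨g, hg1, hg2⟩ :=
    emp_of_mk_lt (Y := Set.range fx) (lt_of_le_of_lt Cardinal.mk_range_le hcard)
  set F : ℕ → Set (Set α) := fun n => (e n) '' (Iio (g n)) with hFdef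
  set V : ℕ → Set α := fun n => ⋃₀ F n with hVdef
  have hFfin : ∀ n, (F n).Finite := fun n => (Set.finite_Iio _).image _
  have hFsub : ∀ n, F n ⊆ 𝒰 n := by
    intro n U hU
    obtain ⟨m, -, rfl⟩ := hU
    rw [he n]
    exact mem_range_self m
  have hmemV : ∀ (x : α) (n : ℕ), x ∈ V n ↔ fx x n < g n := by
    intro x n
    constructor
    · rintro ⟨U, ⟨m, hm, rfl⟩, hxU⟩
      exact lt_of_le_of_lt (hfx_min x n m hxU) hm
    · intro h
      exact ⟨e n (fx x n), ⟨fx x n, h, rfl⟩, hfx_mem x n⟩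
  have hVne : ∀ n, V n ≠ univ := fun n h => hnfs n ⟨F n, hFsub n, hFfin n, h⟩
  set S : α → Set ℕ := fun p => {n | fx p n < g n} with hSdef
  have hS_inf : ∀ p, (S p).Infinite := fun p => hg1 (fx p) ⟨p, rfl⟩
  have hS_lin : ∀ p q : α, (S p \ S q).Finite ∨ (S q \ S p).Finite := by
    intro p q
    have h := hg2 (fx p) ⟨p, rfl⟩ (fx q) ⟨q, rfl⟩
    have e1 : S p \ S q = {n | fx p n < g n ∧ g n ≤ fx q n} := by
      ext n
      simp only [hSdef, Set.mem_diff, Set.mem_setOf_eq, not_lt]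
    have e2 : S q \ S p = {n | fx q n < g n ∧ g n ≤ fx p n} := by
      ext n
      simp only [hSdef, Set.mem_diff, Set.mem_setOf_eq, not_lt]
    rw [e1, e2]
    exact h
  have hmemS : ∀ (x : α) (n : ℕ), x ∈ V n ↔ n ∈ S x := fun x n => hmemV x n
  refine ⟨F, fun n => ⟨hFfin n, hFsub n⟩, ?_⟩
  show Set.range V ∈ BorelTau α
  have hlarge : ∀ x : α, {U | U ∈ Set.range V ∧ x ∈ U}.Infinite := by
    intro x
    by_contra hfin'
    rw [Set.not_infinite] at hfin'
    have hApt : ∀ n, n ∈ S x → V n ∈ {U | U ∈ Set.range V ∧ x ∈ U} :=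
      fun n hn => ⟨⟨n, rfl⟩, (hmemS x n).mpr hn⟩
    have hheavy : ∃ W ∈ {U | U ∈ Set.range V ∧ x ∈ U}, {n | n ∈ S x ∧ V n = W}.Infinite := by
      by_contra hc
      push_neg at hc
      have hsub : S x ⊆ ⋃ W ∈ {U | U ∈ Set.range V ∧ x ∈ U}, {n | n ∈ S x ∧ V n = W} := by
        intro n hn
        exact Set.mem_biUnion (hApt n hn) ⟨hn, rfl⟩
      have hfin2 : (⋃ W ∈ {U | U ∈ Set.range V ∧ x ∈ U}, {n | n ∈ S x ∧ V n = W}).Finite := by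
        refine hfin'.biUnion ?_
        intro W hW
        have := hc W hW
        exact this
      exact (hS_inf x) (hfin2.subset hsub)
    obtain ⟨W, hW𝒜, hWinf⟩ := hheavy
    have hesc : ∀ n, ∃ p : α, p ∉ V n := fun n => (Set.ne_univ_iff_exists_notMem _).mp (hVne n)
    choose r hr using hesc
    set ι : Set α → ℕ := fun U => if h : U ∈ Set.range V then h.choose else 0 with hιdef
    have hιspec : ∀ U, (hU : U ∈ Set.range V) → V (ι U) = U := by
      intro U hU
      simp only [hιdef, dif_pos hU]
      exact hU.choose_spec
    obtain ⟨n₁, hn₁⟩ := hWinf.nonempty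
    have hxW : x ∈ W := hn₁.2 ▸ (hmemS x n₁).mpr hn₁.1
    have hrW : r (ι W) ∉ W := by
      have := hr (ι W)
      rwa [hιspec W hW𝒜.1] at this
    have hfact : (S (r (ι W)) \ S x).Finite := by
      rcases hS_lin x (r (ι W)) with h | h
      · exfalso
        have hsub : {n | n ∈ S x ∧ V n = W} ⊆ S x \ S (r (ι W)) := by
          rintro n ⟨hn1, hn2⟩
          refine ⟨hn1, fun hc => hrW ?_⟩
          have := (hmemS (r (ι W)) n).mpr hc
          rwa [hn2] at this
        exact (hWinf.mono hsub) h
      · exact h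
    have hQne : W ∈ hfin'.toFinset := hfin'.mem_toFinset.mpr hW𝒜
    have hIinf : (⋂ U ∈ hfin'.toFinset, S (r (ι U))).Infinite :=
      almost_linear_biInter_infinite (fun U => S (r (ι U))) (fun U => hS_inf _)
        (fun U U' => hS_lin _ _) hfin'.toFinset ⟨W, hQne⟩
    obtain ⟨n, hn1, hn2⟩ := (hIinf.diff hfact).nonempty
    have hme : ∀ U (hU : U ∈ {U | U ∈ Set.range V ∧ x ∈ U}), n ∈ S (r (ι U)) := by
      intro U hU
      exact Set.mem_iInter₂.mp hn1 U (hfin'.mem_toFinset.mpr hU)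
    have hnW : n ∈ S (r (ι W)) := hme W hW𝒜
    have hnSx : n ∈ S x := by
      by_contra hc
      exact hn2 ⟨hnW, hc⟩
    have hVn𝒜 : V n ∈ {U | U ∈ Set.range V ∧ x ∈ U} := hApt n hnSx
    have h1 : r (ι (V n)) ∈ V n := (hmemS _ n).mpr (hme (V n) hVn𝒜)
    have h2 : r (ι (V n)) ∈ V (ι (V n)) := by rw [hιspec (V n) hVn𝒜.1]; exact h1
    exact hr (ι (V n)) h2
  refine ⟨Set.countable_range V, ?_, ⟨⟨?_, ?_⟩, hlarge⟩, ?_⟩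
  · rintro U ⟨n, rfl⟩
    exact MeasurableSet.sUnion ((hFfin n).countable)
      (fun t ht => (h𝒰 n).2.1 t (hFsub n ht))
  · apply Set.eq_univ_iff_forall.mpr
    intro x
    obtain ⟨n, hn⟩ := (hS_inf x).nonempty
    exact ⟨V n, ⟨n, rfl⟩, (hmemS x n).mpr hn⟩
  · rintro ⟨n, hn⟩
    exact hVne n hn
  · intro x y
    rcases hS_lin x y with h | h
    · left
      refine (h.image V).subset ?_
      rintro U ⟨⟨n, rfl⟩, hx, hy⟩
      exact ⟨n, ⟨(hmemS x n).mp hx, fun hc => hy ((hmemS y n).mpr hc)⟩, rfl⟩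
    · right
      refine (h.image V).subset ?_
      rintro U ⟨⟨n, rfl⟩, hy, hx⟩
      exact ⟨n, ⟨(hmemS y n).mp hy, fun hc => hx ((hmemS x n).mpr hc)⟩, rfl⟩
/-! ### `Ufin(B_Γ,B_T)` implies `Ufin(Γ,T)` -/

theorem ufin_borel_to_open {X : Set ℝ}
    (h : Ufin (BorelGamma ↥X) (BorelTau ↥X)) :
    Ufin (OpenGamma ↥X) (OpenTau ↥X) := by
  intro 𝒰 h𝒰 hnfs
  obtain ⟨F, hF, hT⟩ := h 𝒰 (fun n => ⟨(h𝒰 n).1,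
    fun U hU => ((h𝒰 n).2.1 U hU).measurableSet, (h𝒰 n).2.2⟩) hnfs
  refine ⟨F, hF, hT.1, ?_, hT.2.2⟩
  rintro U ⟨n, rfl⟩
  exact isOpen_sUnion (fun t ht => (h𝒰 n).2.1 t ((hF n).2 ht))
/-! ### A Cantor-type embedding of `P(ℕ)` into `ℝ` -/

namespace Witness

noncomputable section

/-- weight of digit `k` -/
def w (k : ℕ) : ℝ := (1 / 4 : ℝ) ^ (k + 1)

lemma w_pos (k : ℕ) : 0 < w k := by simp only [w]; positivity

lemma w_antitone {j k : ℕ} (h : j ≤ k) : w k ≤ w j := by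
  refine pow_le_pow_of_le_one (by norm_num) (by norm_num) ?_
  omega

lemma summable_w : Summable w := by
  have h := summable_geometric_of_lt_one (r := (1/4 : ℝ)) (by norm_num) (by norm_num)
  have : w = fun k => (1/4 : ℝ) ^ k * (1/4) := by
    funext k
    simp [w, pow_succ]
  rw [this]
  exact h.mul_right _

lemma summable_ind (S : Set ℕ) : Summable (S.indicator w) :=
  summable_w.indicator S

/-- the embedding of `P(ℕ)` into `[0, 1/3]` -/
def psi (S : Set ℕ) : ℝ := ∑' k, S.indicator w k

lemma psi_nonneg (S : Set ℕ) : 0 ≤ psi S :=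
  tsum_nonneg (fun k => Set.indicator_nonneg (fun a _ => (w_pos a).le) k)

lemma tsum_w : ∑' k, w k = 1 / 3 := by
  have : (fun k => (1/4 : ℝ) ^ k * (1/4)) = w := by
    funext k; simp [w, pow_succ]
  rw [show (1/3 : ℝ) = (1 - 1/4)⁻¹ * (1/4) by norm_num,
    ← tsum_geometric_of_lt_one (r := (1/4 : ℝ)) (by norm_num) (by norm_num), ← tsum_mul_right]
  rw [this]

lemma psi_le (S : Set ℕ) : psi S ≤ 1 / 3 := by
  rw [← tsum_w]
  exact Summable.tsum_le_tsum (fun k => Set.indicator_le_self' (fun a _ => (w_pos a).le) k) (summable_ind S) summable_w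

/-- key separation estimate -/
lemma psi_sep {S T : Set ℕ} {k : ℕ} (hk : k ∈ S) (hk' : k ∉ T) :
    2 / 3 * w k ≤ |psi S - psi T| := by
  classical
  set d : ℕ → ℝ := fun j => S.indicator w j - T.indicator w j with hd
  have hds : Summable d := (summable_ind S).sub (summable_ind T)
  have hpsi : psi S - psi T = ∑' j, d j := (Summable.tsum_sub (summable_ind S) (summable_ind T)).symm
  have hJne : k ∈ {j | ¬(j ∈ S ↔ j ∈ T)} := by
    simp only [Set.mem_setOf_eq]
    intro h
    exact hk' (h.mp hk)
  set j₀ := sInf {j | ¬(j ∈ S ↔ j ∈ T)} with hj₀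
  have hj₀mem : ¬(j₀ ∈ S ↔ j₀ ∈ T) := Nat.sInf_mem ⟨k, hJne⟩
  have hj₀le : j₀ ≤ k := Nat.sInf_le hJne
  have hzero : ∀ j < j₀, d j = 0 := by
    intro j hj
    have hiff : j ∈ S ↔ j ∈ T := by
      by_contra hc
      exact Nat.notMem_of_lt_sInf hj hc
    by_cases hjS : j ∈ S
    · simp [hd, Set.indicator_of_mem hjS, Set.indicator_of_mem (hiff.mp hjS)]
    · simp [hd, Set.indicator_of_notMem hjS,
        Set.indicator_of_notMem (fun h => hjS (hiff.mpr h))]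
  have habs : |d j₀| = w j₀ := by
    by_cases hS0 : j₀ ∈ S
    · have hT0 : j₀ ∉ T := fun h => hj₀mem ⟨fun _ => h, fun _ => hS0⟩
      simp [hd, Set.indicator_of_mem hS0, Set.indicator_of_notMem hT0,
        abs_of_pos (w_pos j₀)]
    · have hT0 : j₀ ∈ T := by
        by_contra hT0
        exact hj₀mem ⟨fun h => absurd h hS0, fun h => absurd h hT0⟩
      simp [hd, Set.indicator_of_notMem hS0, Set.indicator_of_mem hT0,
        abs_of_pos (w_pos j₀)]
  have hsplit : (∑ j ∈ Finset.range (j₀ + 1), d j) + ∑' j, d (j + (j₀ + 1)) = ∑' j, d j :=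
    Summable.sum_add_tsum_nat_add (j₀ + 1) hds
  have hsum1 : ∑ j ∈ Finset.range (j₀ + 1), d j = d j₀ := by
    rw [Finset.sum_range_succ]
    have : ∑ j ∈ Finset.range j₀, d j = 0 :=
      Finset.sum_eq_zero (fun j hj => hzero j (Finset.mem_range.mp hj))
    rw [this, zero_add]
  have hdle : ∀ j, |d j| ≤ w j := by
    intro j
    by_cases hjS : j ∈ S <;> by_cases hjT : j ∈ T <;>
      simp [hd, Set.indicator_of_mem, Set.indicator_of_notMem, hjS, hjT,
        abs_of_pos (w_pos j), (w_pos j).le]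
  have hsumw' : Summable (fun j => w (j + (j₀ + 1))) := by
    exact (summable_nat_add_iff (j₀ + 1)).mpr summable_w
  have hsumd' : Summable (fun j => d (j + (j₀ + 1))) := by
    exact (summable_nat_add_iff (j₀ + 1)).mpr hds
  have htail2 : ∑' j, w (j + (j₀ + 1)) = 1 / 3 * w j₀ := by
    have hrw : (fun j => w (j + (j₀ + 1))) = fun j => (1/4 : ℝ) ^ j * ((1/4) ^ (j₀ + 1) * (1/4)) := by
      funext j
      simp only [w]
      ring
    rw [hrw, tsum_mul_right, tsum_geometric_of_lt_one (by norm_num) (by norm_num)]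
    simp only [w]
    ring_nf
  have htail : |∑' j, d (j + (j₀ + 1))| ≤ 1 / 3 * w j₀ := by
    calc |∑' j, d (j + (j₀ + 1))| ≤ ∑' j, |d (j + (j₀ + 1))| := by
          simpa [Real.norm_eq_abs] using
            norm_tsum_le_tsum_norm (f := fun j => d (j + (j₀ + 1))) (by simpa [Real.norm_eq_abs] using hsumd'.abs)
      _ ≤ ∑' j, w (j + (j₀ + 1)) := Summable.tsum_le_tsum (fun j => hdle _) hsumd'.abs hsumw'
      _ = 1 / 3 * w j₀ := htail2
  have hlow : 2 / 3 * w j₀ ≤ |∑' j, d j| := by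
    have h1 : |d j₀| ≤ |∑' j, d j| + |∑' j, d (j + (j₀ + 1))| := by
      calc |d j₀| = |(∑' j, d j) - ∑' j, d (j + (j₀ + 1))| := by
            rw [← hsum1, ← hsplit]; congr 1; ring
        _ ≤ |∑' j, d j| + |∑' j, d (j + (j₀ + 1))| := abs_sub _ _
    rw [habs] at h1
    linarith
  rw [hpsi]
  calc 2 / 3 * w k ≤ 2 / 3 * w j₀ := by
        have := w_antitone hj₀le
        linarith
    _ ≤ |∑' j, d j| := hlow

lemma psi_inj : Function.Injective psi := by
  intro S T h
  by_contra hne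
  have : ∃ k, (k ∈ S ∧ k ∉ T) ∨ (k ∈ T ∧ k ∉ S) := by
    by_contra hc
    push_neg at hc
    apply hne
    ext k
    have := hc k
    tauto
  obtain ⟨k, hk | hk⟩ := this
  · have := psi_sep hk.1 hk.2
    rw [h] at this
    simp only [sub_self, abs_zero] at this
    nlinarith [w_pos k]
  · have := psi_sep hk.1 hk.2
    rw [h] at this
    simp only [sub_self, abs_zero] at this
    nlinarith [w_pos k]

/-- the open set of reals deciding digit `k` -/
def G (k : ℕ) : Set ℝ := ⋃ (S : Set ℕ) (_ : k ∈ S), Metric.ball (psi S) (2 / 3 * w k)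

lemma G_open (k : ℕ) : IsOpen (G k) :=
  isOpen_iUnion (fun _ => isOpen_iUnion (fun _ => Metric.isOpen_ball))

lemma mem_G {S : Set ℕ} {k : ℕ} : psi S ∈ G k ↔ k ∈ S := by
  constructor
  · rintro hmem
    simp only [G, Set.mem_iUnion] at hmem
    obtain ⟨T, hkT, hball⟩ := hmem
    by_contra hkS
    have hsep := psi_sep hkT hkS
    rw [Metric.mem_ball, Real.dist_eq, abs_sub_comm] at hball
    linarith
  · intro hk
    simp only [G, Set.mem_iUnion]
    exact ⟨S, hk, Metric.mem_ball_self (mul_pos (by norm_num) (w_pos k))⟩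

end

end Witness
namespace Witness

noncomputable section

/-- graph of `f` as a subset of `ℕ` via pairing -/
def Sf (f : ℕ → ℕ) : Set ℕ := Set.range fun n => Nat.pair n (f n)

lemma mem_Sf {f : ℕ → ℕ} {n i : ℕ} : Nat.pair n i ∈ Sf f ↔ f n = i := by
  constructor
  · rintro ⟨n', hn'⟩
    obtain ⟨h1, h2⟩ := Nat.pair_eq_pair.mp hn'
    rw [← h1, h2]
  · rintro rfl
    exact ⟨n, rfl⟩

/-- the embedding of Baire space into `ℝ` -/
def phi (f : ℕ → ℕ) : ℝ := psi (Sf f)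

lemma phi_inj : Function.Injective phi := by
  intro f f' h
  have hS : Sf f = Sf f' := psi_inj h
  funext n
  have : Nat.pair n (f n) ∈ Sf f' := hS ▸ mem_Sf.mpr rfl
  exact (mem_Sf.mp this).symm

lemma phi_nonneg (f : ℕ → ℕ) : 0 ≤ phi f := psi_nonneg _
lemma phi_le (f : ℕ → ℕ) : phi f ≤ 1 / 3 := psi_le _

lemma phi_mem_G {f : ℕ → ℕ} {n i : ℕ} : phi f ∈ G (Nat.pair n i) ↔ f n = i :=
  mem_G.trans mem_Sf

/-- the isolated marker points -/
def dfun (j : ℕ) : ℝ := (j : ℝ) + 2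

lemma dfun_inj : Function.Injective dfun := by
  intro a b h
  have : (a : ℝ) = b := by simpa [dfun] using h
  exact_mod_cast this

lemma phi_ne_dfun (f : ℕ → ℕ) (j : ℕ) : phi f ≠ dfun j := by
  have h1 := phi_le f
  have h2 : (2 : ℝ) ≤ dfun j := by
    simp only [dfun]
    have : (0:ℝ) ≤ (j:ℝ) := Nat.cast_nonneg j
    linarith
  intro h
  rw [h] at h1
  linarith

lemma dfun_dist {j j' : ℕ} (h : j ≠ j') : 1 ≤ |dfun j - dfun j'| := by
  have h' : (j : ℤ) ≠ (j' : ℤ) := by exact_mod_cast h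
  have := Int.one_le_abs (sub_ne_zero.mpr h')
  have hcast : dfun j - dfun j' = (((j : ℤ) - (j' : ℤ) : ℤ) : ℝ) := by
    push_cast [dfun]
    ring
  rw [hcast, ← Int.cast_abs]
  exact_mod_cast this

variable (Γ : Set (ℕ → ℕ))

/-- the witness set of reals -/
def XP : Set ℝ := phi '' Γ ∪ Set.range dfun

lemma phi_mem_XP {f : ℕ → ℕ} (hf : f ∈ Γ) : phi f ∈ XP Γ := Or.inl ⟨f, hf, rfl⟩
lemma dfun_mem_XP (j : ℕ) : dfun j ∈ XP Γ := Or.inr ⟨j, rfl⟩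

/-- the basic open sets of the γ-covers -/
def A (n m : ℕ) : Set ↥(XP Γ) :=
  {z | (∃ f ∈ Γ, (z : ℝ) = phi f ∧ f n ≤ m) ∨
       (∃ j : ℕ, (z : ℝ) = dfun j ∧ ∀ i, m ≤ i → j ≠ Nat.pair n i)}

variable {Γ}

lemma memA_phi {f : ℕ → ℕ} (hf : f ∈ Γ) (hz : phi f ∈ XP Γ) {n m : ℕ} :
    (⟨phi f, hz⟩ : ↥(XP Γ)) ∈ A Γ n m ↔ f n ≤ m := by
  constructor
  · rintro (⟨f', hf', heq, hle⟩ | ⟨j, heq, -⟩)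
    · rwa [phi_inj heq] 
    · exact absurd heq (phi_ne_dfun f j)
  · intro h
    exact Or.inl ⟨f, hf, rfl, h⟩

lemma memA_d {j : ℕ} (hz : dfun j ∈ XP Γ) {n m : ℕ} :
    (⟨dfun j, hz⟩ : ↥(XP Γ)) ∈ A Γ n m ↔ ∀ i, m ≤ i → j ≠ Nat.pair n i := by
  constructor
  · rintro (⟨f', hf', heq, hle⟩ | ⟨j', heq, hcond⟩)
    · exact absurd heq.symm (phi_ne_dfun f' j)
    · rwa [dfun_inj heq]
  · intro h
    exact Or.inr ⟨j, rfl, h⟩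

lemma memA_dpair {n i : ℕ} (hz : dfun (Nat.pair n i) ∈ XP Γ) {m : ℕ} :
    (⟨dfun (Nat.pair n i), hz⟩ : ↥(XP Γ)) ∈ A Γ n m ↔ i < m := by
  rw [memA_d hz]
  constructor
  · intro h
    by_contra hc
    push_neg at hc
    exact h i hc rfl
  · intro h i' hi' heq
    obtain ⟨-, h2⟩ := Nat.pair_eq_pair.mp heq
    omega

lemma A_open (n m : ℕ) : IsOpen (A Γ n m) := by
  classical
  set O : Set ℝ :=
    (Set.Iio (1 : ℝ) ∩ ⋃ (i : ℕ) (_ : i ≤ m), G (Nat.pair n i)) ∪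
      ⋃ (j : ℕ) (_ : ∀ i, m ≤ i → j ≠ Nat.pair n i), Metric.ball (dfun j) (1 / 2) with hO
  have hOopen : IsOpen O := by
    refine IsOpen.union (IsOpen.inter isOpen_Iio ?_) ?_
    · exact isOpen_iUnion (fun i => isOpen_iUnion (fun _ => G_open _))
    · exact isOpen_iUnion (fun j => isOpen_iUnion (fun _ => Metric.isOpen_ball))
  have heq : A Γ n m = Subtype.val ⁻¹' O := by
    ext z
    obtain ⟨zval, hz⟩ := z
    rcases hz with ⟨f, hf, rfl⟩ | ⟨j, rfl⟩
    · have hz' : phi f ∈ XP Γ := Or.inl ⟨f, hf, rfl⟩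
      rw [Set.mem_preimage]
      show _ ∈ A Γ n m ↔ phi f ∈ O
      rw [memA_phi hf hz']
      constructor
      · intro h
        refine Or.inl ⟨?_, ?_⟩
        · have := phi_le f
          simp only [Set.mem_Iio]
          linarith
        · simp only [Set.mem_iUnion]
          exact ⟨f n, h, phi_mem_G.mpr rfl⟩
      · rintro (⟨-, h2⟩ | h)
        · simp only [Set.mem_iUnion] at h2
          obtain ⟨i, hi, hG⟩ := h2
          rw [phi_mem_G.mp hG]
          exact hi
        · exfalso
          simp only [Set.mem_iUnion] at h
          obtain ⟨j, -, hball⟩ := h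
          rw [Metric.mem_ball, Real.dist_eq] at hball
          have h1 := phi_le f
          have h2 := phi_nonneg f
          have h3 : (2 : ℝ) ≤ dfun j := by
            simp only [dfun]
            have : (0:ℝ) ≤ (j:ℝ) := Nat.cast_nonneg j
            linarith
          have : dfun j - phi f ≤ |phi f - dfun j| := by
            rw [abs_sub_comm]
            exact le_abs_self _
          linarith
    · have hz' : dfun j ∈ XP Γ := Or.inr ⟨j, rfl⟩
      rw [Set.mem_preimage]
      show _ ∈ A Γ n m ↔ dfun j ∈ O
      rw [memA_d hz']
      constructor
      · intro h
        refine Or.inr ?_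
        simp only [Set.mem_iUnion]
        exact ⟨j, h, Metric.mem_ball_self (by norm_num)⟩
      · rintro (⟨h1, -⟩ | h)
        · exfalso
          simp only [Set.mem_Iio] at h1
          have : (2 : ℝ) ≤ dfun j := by
            simp only [dfun]
            have : (0:ℝ) ≤ (j:ℝ) := Nat.cast_nonneg j
            linarith
          linarith
        · simp only [Set.mem_iUnion] at h
          obtain ⟨j', hj', hball⟩ := h
          rw [Metric.mem_ball, Real.dist_eq] at hball
          have : j = j' := by
            by_contra hc
            have := dfun_dist hc
            linarith
          rwa [this]
  rw [heq]
  exact hOopen.preimage continuous_subtype_val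

lemma A_inj (n : ℕ) : Function.Injective (A Γ n) := by
  intro m m' h
  by_contra hne
  rcases Nat.lt_or_ge m m' with hlt | hge
  · have hz : dfun (Nat.pair n m) ∈ XP Γ := dfun_mem_XP Γ _
    have h1 : (⟨dfun (Nat.pair n m), hz⟩ : ↥(XP Γ)) ∈ A Γ n m' := (memA_dpair hz).mpr hlt
    rw [← h] at h1
    have := (memA_dpair hz).mp h1
    omega
  · have hlt : m' < m := by omega
    have hz : dfun (Nat.pair n m') ∈ XP Γ := dfun_mem_XP Γ _
    have h1 : (⟨dfun (Nat.pair n m'), hz⟩ : ↥(XP Γ)) ∈ A Γ n m := (memA_dpair hz).mpr hlt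
    rw [h] at h1
    have := (memA_dpair hz).mp h1
    omega

end

end Witness
namespace Witness

noncomputable section

variable (Γ : Set (ℕ → ℕ))

/-- the sequence of open γ-covers -/
def cov (n : ℕ) : Set (Set ↥(XP Γ)) := Set.range (A Γ n)

lemma cov_gamma : ∀ n, cov Γ n ∈ OpenGamma ↥(XP Γ) := by
  intro n
  refine ⟨Set.countable_range _, ?_, ⟨?_, ?_⟩, ?_, ?_⟩
  · rintro U ⟨m, rfl⟩
    exact A_open n m
  · apply Set.eq_univ_iff_forall.mpr
    rintro ⟨zval, hz⟩
    rcases hz with ⟨f, hf, rfl⟩ | ⟨j, rfl⟩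
    · exact ⟨A Γ n (f n), ⟨f n, rfl⟩, (memA_phi hf (Or.inl ⟨f, hf, rfl⟩)).mpr le_rfl⟩
    · by_cases hj : ∃ i, j = Nat.pair n i
      · obtain ⟨i, rfl⟩ := hj
        exact ⟨A Γ n (i + 1), ⟨i + 1, rfl⟩,
          (memA_dpair (Or.inr ⟨_, rfl⟩)).mpr (Nat.lt_succ_self i)⟩
      · push_neg at hj
        exact ⟨A Γ n 0, ⟨0, rfl⟩, (memA_d (Or.inr ⟨j, rfl⟩)).mpr (fun i _ => hj i)⟩
  · rintro ⟨m, hm⟩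
    have hz : dfun (Nat.pair n m) ∈ XP Γ := Or.inr ⟨_, rfl⟩
    have : (⟨dfun (Nat.pair n m), hz⟩ : ↥(XP Γ)) ∈ A Γ n m := by
      rw [hm]; trivial
    have := (memA_dpair hz).mp this
    omega
  · exact Set.infinite_range_of_injective (A_inj n)
  · rintro ⟨zval, hz⟩
    rcases hz with ⟨f, hf, rfl⟩ | ⟨j, rfl⟩
    · refine (((Set.finite_Iio (f n)).image (A Γ n)).subset ?_)
      rintro U ⟨⟨m, rfl⟩, hnot⟩
      refine ⟨m, ?_, rfl⟩
      have : ¬ f n ≤ m := fun hc => hnot ((memA_phi hf (Or.inl ⟨f, hf, rfl⟩)).mpr hc)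
      simpa using this
    · by_cases hj : ∃ i, j = Nat.pair n i
      · obtain ⟨i, rfl⟩ := hj
        refine (((Set.finite_Iic i).image (A Γ n)).subset ?_)
        rintro U ⟨⟨m, rfl⟩, hnot⟩
        refine ⟨m, ?_, rfl⟩
        have : ¬ i < m := fun hc => hnot ((memA_dpair (Or.inr ⟨_, rfl⟩)).mpr hc)
        simpa using this
      · push_neg at hj
        have : {U | U ∈ cov Γ n ∧ (⟨dfun j, Or.inr ⟨j, rfl⟩⟩ : ↥(XP Γ)) ∉ U} = ∅ := by
          apply Set.eq_empty_iff_forall_notMem.mpr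
          rintro U ⟨⟨m, rfl⟩, hnot⟩
          exact hnot ((memA_d (Or.inr ⟨j, rfl⟩)).mpr (fun i _ => hj i))
        rw [this]
        exact Set.finite_empty

lemma cov_nfs (hconst : ∀ m : ℕ, (fun _ : ℕ => m) ∈ Γ) :
    ∀ n, ¬ ∃ F : Set (Set ↥(XP Γ)), F ⊆ cov Γ n ∧ F.Finite ∧ ⋃₀ F = univ := by
  rintro n ⟨F, hsub, hfin, hcover⟩
  have hMfin : ((A Γ n) ⁻¹' F).Finite := Set.Finite.preimage ((A_inj n).injOn) hfin
  obtain ⟨b, hb⟩ := hMfin.bddAbove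
  set f : ℕ → ℕ := fun _ => b + 1 with hfdef
  have hf : f ∈ Γ := hconst (b + 1)
  have hz : phi f ∈ XP Γ := Or.inl ⟨f, hf, rfl⟩
  have : (⟨phi f, hz⟩ : ↥(XP Γ)) ∈ ⋃₀ F := by rw [hcover]; trivial
  obtain ⟨U, hUF, hzU⟩ := this
  obtain ⟨m, rfl⟩ := hsub hUF
  have hm : m ∈ (A Γ n) ⁻¹' F := hUF
  have hle := (memA_phi hf hz).mp hzU
  have := hb hm
  simp only [hfdef] at hle
  omega

theorem witness_not_ufin (hconst : ∀ m : ℕ, (fun _ : ℕ => m) ∈ Γ)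
    (hΓ : ¬ ExcludedMiddleProp Γ) :
    ¬ Ufin (OpenGamma ↥(XP Γ)) (OpenTau ↥(XP Γ)) := by
  classical
  intro hU
  obtain ⟨F, hF, hTau⟩ := hU (cov Γ) (cov_gamma Γ) (cov_nfs Γ hconst)
  set M : ℕ → Set ℕ := fun n => (A Γ n) ⁻¹' (F n) with hMdef
  have hMfin : ∀ n, (M n).Finite :=
    fun n => Set.Finite.preimage ((A_inj n).injOn) (hF n).1
  have hFeq : ∀ n, F n = (A Γ n) '' (M n) := by
    intro n
    rw [hMdef]
    exact (Set.image_preimage_eq_of_subset (by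
      have := (hF n).2
      rwa [cov] at this)).symm
  set g : ℕ → ℕ := fun n => if h : (M n).Nonempty then sSup (M n) + 1 else 0 with hgdef
  have hlt : ∀ n m, m ∈ M n → m < g n := by
    intro n m hm
    have hne : (M n).Nonempty := ⟨m, hm⟩
    simp only [hgdef, dif_pos hne]
    have := le_csSup (hMfin n).bddAbove hm
    omega
  have hgM : ∀ n, 0 < g n → (M n).Nonempty := by
    intro n hg
    by_contra hc
    simp only [hgdef, dif_neg hc] at hg
    omega
  have hsup_mem : ∀ n, (M n).Nonempty → sSup (M n) ∈ M n :=
    fun n h => Nat.sSup_mem h (hMfin n).bddAbove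
  set V : ℕ → Set ↥(XP Γ) := fun n => ⋃₀ F n with hVdef
  have hmemV : ∀ f, f ∈ Γ → ∀ (hz : phi f ∈ XP Γ) (n : ℕ),
      (⟨phi f, hz⟩ : ↥(XP Γ)) ∈ V n ↔ f n < g n := by
    intro f hf hz n
    constructor
    · rintro ⟨U, hUF, hzU⟩
      rw [hFeq n] at hUF
      obtain ⟨m, hm, rfl⟩ := hUF
      have := (memA_phi hf hz).mp hzU
      have := hlt n m hm
      omega
    · intro h
      have hne : (M n).Nonempty := hgM n (by omega)
      have hgn : g n = sSup (M n) + 1 := by simp only [hgdef, dif_pos hne]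
      refine ⟨A Γ n (sSup (M n)), ?_, ?_⟩
      · rw [hFeq n]
        exact Set.mem_image_of_mem _ (hsup_mem n hne)
      · exact (memA_phi hf hz).mpr (by omega)
  have hznot : ∀ n, (⟨dfun (Nat.pair n (g n)), Or.inr ⟨_, rfl⟩⟩ : ↥(XP Γ)) ∉ V n := by
    rintro n ⟨U, hUF, hzU⟩
    rw [hFeq n] at hUF
    obtain ⟨m, hm, rfl⟩ := hUF
    have := (memA_dpair (Or.inr ⟨_, rfl⟩)).mp hzU
    have := hlt n m hm
    omega
  have hVinj : ∀ n n', (M n).Nonempty → (M n').Nonempty → V n = V n' → n = n' := by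
    intro n n' hn hn' heq
    by_contra hne
    apply hznot n
    rw [heq]
    obtain ⟨m', hm'⟩ := hn'
    refine ⟨A Γ n' m', by rw [hFeq n']; exact Set.mem_image_of_mem _ hm', ?_⟩
    refine (memA_d (Or.inr ⟨_, rfl⟩)).mpr ?_
    intro i _ hpair
    exact hne (Nat.pair_eq_pair.mp hpair).1
  have hTauC : IsTauCover (Set.range V) := hTau.2.2
  apply hΓ
  refine ⟨g, ?_, ?_⟩
  · intro f hf
    set z : ↥(XP Γ) := ⟨phi f, Or.inl ⟨f, hf, rfl⟩⟩ with hzdef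
    have hlarge := hTauC.1.2 z
    have hsub : {U | U ∈ Set.range V ∧ z ∈ U} ⊆ V '' {n | z ∈ V n} := by
      rintro U ⟨⟨n, rfl⟩, h⟩
      exact ⟨n, h, rfl⟩
    have hidx : {n | z ∈ V n}.Infinite := by
      by_contra hc
      rw [Set.not_infinite] at hc
      exact hlarge ((hc.image V).subset hsub)
    refine hidx.mono ?_
    intro n hn
    exact (hmemV f hf _ n).mp hn
  · intro f hf f' hf'
    set x : ↥(XP Γ) := ⟨phi f, Or.inl ⟨f, hf, rfl⟩⟩ with hxdef
    set y : ↥(XP Γ) := ⟨phi f', Or.inl ⟨f', hf', rfl⟩⟩ with hydef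
    have key : ∀ (u u' : ℕ → ℕ) (hu : u ∈ Γ) (hu' : u' ∈ Γ),
        {U | U ∈ Set.range V ∧ (⟨phi u, Or.inl ⟨u, hu, rfl⟩⟩ : ↥(XP Γ)) ∈ U ∧
          (⟨phi u', Or.inl ⟨u', hu', rfl⟩⟩ : ↥(XP Γ)) ∉ U}.Finite →
        {n | u n < g n ∧ g n ≤ u' n}.Finite := by
      intro u u' hu hu' hfin
      have hmaps : ∀ n ∈ {n | u n < g n ∧ g n ≤ u' n},
          V n ∈ {U | U ∈ Set.range V ∧ (⟨phi u, Or.inl ⟨u, hu, rfl⟩⟩ : ↥(XP Γ)) ∈ U ∧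
            (⟨phi u', Or.inl ⟨u', hu', rfl⟩⟩ : ↥(XP Γ)) ∉ U} := by
        rintro n ⟨h1, h2⟩
        refine ⟨⟨n, rfl⟩, (hmemV u hu _ n).mpr h1, fun hc => ?_⟩
        have := (hmemV u' hu' _ n).mp hc
        omega
      have hinjon : Set.InjOn V {n | u n < g n ∧ g n ≤ u' n} := by
        intro n hn n' hn' heq
        obtain ⟨hn1, -⟩ := hn
        obtain ⟨hn1', -⟩ := hn'
        exact hVinj n n' (hgM n (by omega)) (hgM n' (by omega)) heq
      refine Set.Finite.of_finite_image ?_ hinjon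
      exact hfin.subset (Set.image_subset_iff.mpr hmaps)
    rcases hTauC.2 x y with h | h
    · exact Or.inl (key f f' hf hf' h)
    · exact Or.inr (key f' f hf' hf h)

lemma XP_card : Cardinal.mk ↥(XP Γ) ≤ Cardinal.mk ↥Γ + Cardinal.aleph0 := by
  calc Cardinal.mk ↥(XP Γ) ≤ Cardinal.mk ↥(phi '' Γ) + Cardinal.mk ↥(Set.range dfun) :=
        Cardinal.mk_union_le _ _
    _ ≤ Cardinal.mk ↥Γ + Cardinal.aleph0 := by
        refine add_le_add Cardinal.mk_image_le ?_
        calc Cardinal.mk ↥(Set.range dfun) ≤ Cardinal.mk ℕ := Cardinal.mk_range_le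
          _ = Cardinal.aleph0 := Cardinal.mk_nat

end

end Witness
/-! ### The witness set and conclusion -/

lemma exists_bad_X :
    ∃ X : Set ℝ, ¬ Ufin (OpenGamma ↥X) (OpenTau ↥X) ∧ Cardinal.mk ↥X ≤ xCard := by
  have hmem : xCard ∈ {c : Cardinal | ∃ Y : Set (ℕ → ℕ),
      ¬ ExcludedMiddleProp Y ∧ Cardinal.mk ↥Y = c} := csInf_mem xSet_nonempty
  obtain ⟨Y₀, hY₀, hY₀card⟩ := hmem
  set Γ : Set (ℕ → ℕ) := Y₀ ∪ Set.range (fun m : ℕ => (fun _ : ℕ => m)) with hΓdef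
  have hconst : ∀ m : ℕ, (fun _ : ℕ => m) ∈ Γ := fun m => Or.inr ⟨m, rfl⟩
  have hΓfail : ¬ ExcludedMiddleProp Γ := fun h => hY₀ (emp_mono Set.subset_union_left h)
  refine ⟨Witness.XP Γ, Witness.witness_not_ufin Γ hconst hΓfail, ?_⟩
  have h1 : Cardinal.mk ↥Γ ≤ xCard := by
    calc Cardinal.mk ↥Γ ≤ Cardinal.mk ↥Y₀ + Cardinal.mk ↥(Set.range (fun m : ℕ => (fun _ : ℕ => m))) :=
          Cardinal.mk_union_le _ _
      _ ≤ xCard + Cardinal.aleph0 := by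
          refine add_le_add (le_of_eq hY₀card) ?_
          exact Cardinal.mk_range_le.trans (le_of_eq Cardinal.mk_nat)
      _ = xCard := Cardinal.add_eq_left aleph0_le_xCard aleph0_le_xCard
  calc Cardinal.mk ↥(Witness.XP Γ) ≤ Cardinal.mk ↥Γ + Cardinal.aleph0 := Witness.XP_card Γ
    _ ≤ xCard + Cardinal.aleph0 := add_le_add h1 le_rfl
    _ = xCard := Cardinal.add_eq_left aleph0_le_xCard aleph0_le_xCard

/-- non(Ufin(B_Γ,B_T)) = non(Ufin(Γ,T)) = 𝔵. -/
theorem statement13 :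
    nonCard (fun X : Set ℝ => Ufin (BorelGamma ↥X) (BorelTau ↥X)) = xCard ∧
    nonCard (fun X : Set ℝ => Ufin (OpenGamma ↥X) (OpenTau ↥X)) = xCard := by
  obtain ⟨Xw, hXw, hXwcard⟩ := exists_bad_X
  have hXwB : ¬ Ufin (BorelGamma ↥Xw) (BorelTau ↥Xw) := fun h => hXw (ufin_borel_to_open h)
  constructor
  · unfold nonCard
    apply le_antisymm
    · refine le_trans (csInf_le ⟨0, fun c _ => c.zero_le⟩ ?_) hXwcard
      exact ⟨Xw, hXwB, rfl⟩
    · refine le_csInf ⟨_, Xw, hXwB, rfl⟩ ?_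
      rintro c ⟨X, hX, rfl⟩
      exact le_of_not_gt fun hlt => hX (ufin_of_mk_lt hlt)
  · unfold nonCard
    apply le_antisymm
    · refine le_trans (csInf_le ⟨0, fun c _ => c.zero_le⟩ ?_) hXwcard
      exact ⟨Xw, hXw, rfl⟩
    · refine le_csInf ⟨_, Xw, hXw, rfl⟩ ?_
      rintro c ⟨X, hX, rfl⟩
      exact le_of_not_gt fun hlt => hX (ufin_borel_to_open (ufin_of_mk_lt hlt))
end TauCoverPaper
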